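/- For every k ≥ 1 and every unitary U ∈ U(d^n), one has E_{h₁,…,h_k ∈ F_d^{2n}} d^{−n} tr(∂_{h_k}⋯∂_{h₁} U) = 1 if and only if U ∈ P^{(k−1)}. -/

import Mathlib

open Matrix Complex

namespace CH

variable (d n : ℕ) [NeZero d]

/-- Phase space `F_d^{2n}`, written as pairs `(u, v)` with `u, v ∈ F_d^n`. -/
abbrev PSpace := (Fin n → ZMod d) × (Fin n → ZMod d)

/-- Linear maps on `ℂ^{F_d^n}`, as matrices. -/
abbrev Mat := Matrix (Fin n → ZMod d) (Fin n → ZMod d) ℂ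

/-- `ω = e^{2πi/d}`. -/
noncomputable def omg : ℂ := Complex.exp (2 * Real.pi * Complex.I / d)

/-- `τ = (-1)^d e^{iπ/d}`. -/
noncomputable def tau : ℂ := (-1 : ℂ) ^ d * Complex.exp (Real.pi * Complex.I / d)

/-- `D = 2d` if `d = 2`, else `D = d`. -/
def Dd : ℕ := if d = 2 then 4 else d

/-- The translation operator `X^v`, with `X^v |u⟩ = |u + v⟩`. -/
noncomputable def Xop (v : Fin n → ZMod d) : Mat d n :=
  Matrix.of fun u u' => if u = u' + v then 1 else 0

/-- The phase operator `Z^v`, with `Z^v |u⟩ = ω^{u·v} |u⟩`. -/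
noncomputable def Zop (v : Fin n → ZMod d) : Mat d n :=
  Matrix.diagonal fun u => omg d ^ (∑ i, u i * v i : ZMod d).val

/-- The Weyl operator `W_{(u,v)} = τ^{-(|u₁v₁| + ⋯ + |uₙvₙ|)} Z^u X^v`. -/
noncomputable def Weyl (a : PSpace d n) : Mat d n :=
  tau d ^ (-(∑ i, ((a.1 i * a.2 i).val : ℤ))) • (Zop d n a.1 * Xop d n a.2)

/-- Normalized trace inner product `⟨A,B⟩ = d^{-n} tr(A* B)`. -/
noncomputable def trInner (A B : Mat d n) : ℂ := ((d : ℂ) ^ n)⁻¹ * (Aᴴ * B).trace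

/-- Normalized Frobenius norm `‖A‖₂ = ⟨A,A⟩^{1/2}`. -/
noncomputable def hsNorm (A : Mat d n) : ℝ := Real.sqrt (trInner d n A A).re

/-- Pauli derivative `∂_h U = W_h U W_h* U*`. -/
noncomputable def pderiv (h : PSpace d n) (U : Mat d n) : Mat d n :=
  Weyl d n h * U * (Weyl d n h)ᴴ * Uᴴ

/-- The quantity `‖U‖_{P^k}^{2^k} = E_{h₁,…,h_k} d^{-n} tr(∂_{h_k} ⋯ ∂_{h₁} U)`. -/
noncomputable def pq : ℕ → Mat d n → ℂ
  | 0, U => ((d : ℂ) ^ n)⁻¹ * U.trace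
  | (k+1), U => ((d : ℂ) ^ (2*n))⁻¹ * ∑ h : PSpace d n, pq k (pderiv d n h U)

/-- The `k`-th Pauli uniformity norm `‖U‖_{P^k}`, the `2^k`-th root of `pq k U`. -/
noncomputable def pnorm (k : ℕ) (U : Mat d n) : ℝ := (pq d n k U).re ^ (((2:ℝ) ^ k)⁻¹)

/-- The Pauli group `C^{(1)} = {τ^p W_h : p ∈ Z_D, h ∈ F_d^{2n}}`. -/
def pauliGroup : Set (Mat d n) :=
  {U | ∃ (p : ℕ) (h : PSpace d n), U = tau d ^ p • Weyl d n h}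

/-- The Clifford hierarchy. -/
def cliff : ℕ → Set (Mat d n)
  | 0 => {U | ∃ θ : ℝ, U = Complex.exp (θ * Complex.I) • (1 : Mat d n)}
  | 1 => pauliGroup d n
  | (k+2) => {U | U ∈ unitary (Mat d n) ∧
      ∀ P ∈ pauliGroup d n, U * P * Uᴴ ∈ cliff (k+1)}

/-- Pauli polynomials of degree at most `k`. -/
def ppoly : ℕ → Set (Mat d n)
  | 0 => {U | ∃ θ : ℝ, U = Complex.exp (θ * Complex.I) • (1 : Mat d n)}
  | (k+1) => {U | U ∈ unitary (Mat d n) ∧ ∀ h : PSpace d n, pderiv d n h U ∈ ppoly k}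

/-- Symplectic form `[(u,v),(u',v')] = u·v' - u'·v` on `F_d^{2n}`. -/
def symp (a b : PSpace d n) : ZMod d :=
  (∑ i, a.1 i * b.2 i) - (∑ i, b.1 i * a.2 i)

/-- Multiplication of the Heisenberg group. -/
def heisMul (β : PSpace d n → PSpace d n → ZMod (Dd d))
    (x y : ZMod (Dd d) × PSpace d n) : ZMod (Dd d) × PSpace d n :=
  (x.1 + y.1 + β x.2 y.2, x.2 + y.2)

/-! ### Auxiliary lemmas -/

section Aux

variable {d n : ℕ} [NeZero d]

lemma omg_primitive (hd : d ≠ 0) : IsPrimitiveRoot (omg d) d := by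
  simpa [omg] using Complex.isPrimitiveRoot_exp d hd

lemma omg_pow_d : omg d ^ d = 1 := (omg_primitive (NeZero.ne d)).pow_eq_one

lemma omg_pow_mod (x : ℕ) : omg d ^ (x % d) = omg d ^ x := by
  conv_rhs => rw [← Nat.div_add_mod x d]
  rw [pow_add, pow_mul, omg_pow_d, one_pow, one_mul]

/-- The character `χ a = ω^{|a|}`. -/
noncomputable def chi (d : ℕ) [NeZero d] (a : ZMod d) : ℂ := omg d ^ a.val

lemma chi_zero : chi d 0 = 1 := by
  simp [chi, ZMod.val_zero]

lemma chi_add (a b : ZMod d) : chi d (a + b) = chi d a * chi d b := by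
  rw [chi, chi, chi, ZMod.val_add, omg_pow_mod, pow_add]

lemma abs_omg : ‖omg d‖ = 1 := by
  have : (2 * (Real.pi:ℂ) * Complex.I / d) = ((2 * Real.pi / d : ℝ) : ℂ) * Complex.I := by
    push_cast; ring
  rw [omg, this, Complex.norm_exp_ofReal_mul_I]

lemma abs_chi (a : ZMod d) : ‖chi d a‖ = 1 := by
  rw [chi, norm_pow, abs_omg, one_pow]

lemma conj_chi (a : ZMod d) : (starRingEnd ℂ) (chi d a) = chi d (-a) := by
  have h1 : chi d a * chi d (-a) = 1 := by
    rw [← chi_add, add_neg_cancel, chi_zero]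
  have h2 : (starRingEnd ℂ) (chi d a) * chi d a = 1 := by
    rw [mul_comm, Complex.mul_conj, ← Complex.sq_norm, abs_chi]; norm_num
  calc (starRingEnd ℂ) (chi d a) = (starRingEnd ℂ) (chi d a) * (chi d a * chi d (-a)) := by
        rw [h1, mul_one]
    _ = ((starRingEnd ℂ) (chi d a) * chi d a) * chi d (-a) := by ring
    _ = chi d (-a) := by rw [h2, one_mul]

lemma chi_mul_conj (a b : ZMod d) :
    chi d a * (starRingEnd ℂ) (chi d b) = chi d (a - b) := by
  rw [conj_chi, ← chi_add, sub_eq_add_neg]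

lemma chi_sum {ι : Type*} (s : Finset ι) (f : ι → ZMod d) :
    chi d (∑ i ∈ s, f i) = ∏ i ∈ s, chi d (f i) := by
  classical
  induction s using Finset.cons_induction with
  | empty => simp [chi_zero]
  | cons a s ha ih => rw [Finset.sum_cons, Finset.prod_cons, chi_add, ih]

lemma sum_chi_univ (hd2 : 1 < d) : ∑ y : ZMod d, chi d y = 0 := by
  have h : ∑ y : ZMod d, chi d y = ∑ i ∈ Finset.range d, omg d ^ i := by
    refine Finset.sum_nbij' (fun y => y.val) (fun i => (i : ZMod d)) ?_ ?_ ?_ ?_ ?_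
    · intro a _; exact Finset.mem_range.mpr (ZMod.val_lt a)
    · intro a _; exact Finset.mem_univ _
    · intro a _; simp [ZMod.natCast_val, ZMod.cast_id]
    · intro a ha; exact ZMod.val_cast_of_lt (Finset.mem_range.mp ha)
    · intro a _; rfl
  rw [h]
  exact (omg_primitive (NeZero.ne d)).geom_sum_eq_zero hd2

lemma sum_chi_mul (hp : d.Prime) (c : ZMod d) (hc : c ≠ 0) :
    ∑ x : ZMod d, chi d (c * x) = 0 := by
  haveI : Fact d.Prime := ⟨hp⟩
  have h := Equiv.sum_comp (Equiv.mulLeft₀ c hc) (chi d)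
  simp only [Equiv.mulLeft₀_apply] at h
  rw [h, sum_chi_univ hp.one_lt]

end Aux
section Aux2

variable {d n : ℕ} [NeZero d]

lemma sum_chi_vec (hp : d.Prime) (c : Fin n → ZMod d) :
    ∑ u : Fin n → ZMod d, chi d (∑ i, c i * u i) =
      if c = 0 then ((d : ℂ) ^ n) else 0 := by
  classical
  have hfac : ∀ u : Fin n → ZMod d, chi d (∑ i, c i * u i) = ∏ i, chi d (c i * u i) :=
    fun u => chi_sum _ _
  simp_rw [hfac]
  rw [← Fintype.piFinset_univ,
    ← Finset.prod_univ_sum (fun _ : Fin n => (Finset.univ : Finset (ZMod d)))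
      (fun i j => chi d (c i * j))]
  by_cases hc : c = 0
  · subst hc
    rw [if_pos rfl]
    have h1 : ∀ i : Fin n, (∑ x : ZMod d, chi d ((0 : Fin n → ZMod d) i * x)) = (d : ℂ) := by
      intro i
      simp [chi_zero, ZMod.card]
    rw [Finset.prod_congr rfl (fun i _ => h1 i)]
    simp
  · rw [if_neg hc]
    obtain ⟨i0, hi0⟩ : ∃ i, c i ≠ 0 := by
      by_contra hall; push_neg at hall; exact hc (funext hall)
    exact Finset.prod_eq_zero (Finset.mem_univ i0) (sum_chi_mul hp (c i0) hi0)

lemma abs_tau : ‖tau d‖ = 1 := by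
  have h1 : (Real.pi : ℂ) * Complex.I / d = ((Real.pi / d : ℝ) : ℂ) * Complex.I := by
    push_cast; ring
  rw [tau, h1, norm_mul, Complex.norm_exp_ofReal_mul_I, mul_one]
  simp

lemma tau_mul_star : tau d * star (tau d) = 1 := by
  rw [show star (tau d) = (starRingEnd ℂ) (tau d) from rfl, Complex.mul_conj,
    ← Complex.sq_norm, abs_tau]
  norm_num

lemma tau_zpow_mul_star (z : ℤ) : tau d ^ z * star (tau d ^ z) = 1 := by
  have h : star (tau d ^ z) = star (tau d) ^ z := by
    rw [← starRingEnd_apply, map_zpow₀, starRingEnd_apply]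
  rw [h, ← mul_zpow, tau_mul_star, _root_.one_zpow]

lemma tau_star_mul_zpow (z : ℤ) : star (tau d ^ z) * tau d ^ z = 1 := by
  rw [mul_comm]; exact tau_zpow_mul_star z

lemma ZX_apply (u v : Fin n → ZMod d) (s a : Fin n → ZMod d) :
    (Zop d n u * Xop d n v) s a = if s = a + v then chi d (∑ i, s i * u i) else 0 := by
  rw [Zop, Matrix.diagonal_mul]
  simp [Xop, chi, mul_ite]

lemma ZXA_apply (u v : Fin n → ZMod d) (A : Mat d n) (s b : Fin n → ZMod d) :
    ((Zop d n u * Xop d n v) * A) s b = chi d (∑ i, s i * u i) * A (s - v) b := by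
  rw [Matrix.mul_apply]
  simp_rw [ZX_apply]
  rw [Finset.sum_eq_single (s - v)]
  · rw [if_pos (by rw [sub_add_cancel])]
  · intro a _ ha
    rw [if_neg, zero_mul]
    intro hs; exact ha (by rw [hs, add_sub_cancel_right])
  · intro habs; exact absurd (Finset.mem_univ _) habs

lemma ZXAZX_apply (u v : Fin n → ZMod d) (A : Mat d n) (s t : Fin n → ZMod d) :
    ((Zop d n u * Xop d n v) * A * (Zop d n u * Xop d n v)ᴴ) s t
      = chi d (∑ i, s i * u i) * star (chi d (∑ i, t i * u i)) * A (s - v) (t - v) := by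
  rw [Matrix.mul_apply]
  simp_rw [Matrix.conjTranspose_apply, ZXA_apply, ZX_apply, apply_ite star, star_zero]
  rw [Finset.sum_eq_single (t - v)]
  · rw [if_pos (by rw [sub_add_cancel])]; ring
  · intro b _ hb
    rw [if_neg, mul_zero]
    intro ht; exact hb (by rw [ht, add_sub_cancel_right])
  · intro habs; exact absurd (Finset.mem_univ _) habs

lemma WAW_apply (h : PSpace d n) (A : Mat d n) (s t : Fin n → ZMod d) :
    (Weyl d n h * A * (Weyl d n h)ᴴ) s t =
      chi d (∑ i, s i * h.1 i) * star (chi d (∑ i, t i * h.1 i)) * A (s - h.2) (t - h.2) := by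
  rw [Weyl, Matrix.conjTranspose_smul, Matrix.smul_mul, Matrix.smul_mul, Matrix.mul_smul,
    smul_smul, tau_zpow_mul_star, one_smul, ZXAZX_apply]

lemma weyl_avg (hp : d.Prime) (A : Mat d n) :
    ∑ h : PSpace d n, Weyl d n h * A * (Weyl d n h)ᴴ = ((d:ℂ)^n * A.trace) • (1 : Mat d n) := by
  classical
  ext s t
  rw [Matrix.sum_apply]
  simp_rw [WAW_apply]
  rw [Fintype.sum_prod_type]
  have hterm : ∀ u v : Fin n → ZMod d,
      chi d (∑ i, s i * u i) * star (chi d (∑ i, t i * u i)) * A (s - v) (t - v)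
      = chi d (∑ i, (fun j => s j - t j) i * u i) * A (s - v) (t - v) := by
    intro u v
    rw [show star (chi d (∑ i, t i * u i)) = (starRingEnd ℂ) (chi d (∑ i, t i * u i)) from rfl,
      chi_mul_conj]
    congr 2
    rw [← Finset.sum_sub_distrib]
    exact Finset.sum_congr rfl fun i _ => (sub_mul _ _ _).symm
  simp_rw [hterm]
  rw [← Finset.sum_mul_sum, sum_chi_vec hp]
  by_cases hst : s = t
  · subst hst
    have hc0 : (fun x => s x - s x) = (0 : Fin n → ZMod d) := funext fun i => sub_self _
    rw [if_pos hc0]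
    have h2 : ∑ v : Fin n → ZMod d, A (s - v) (s - v) = A.trace := by
      rw [show A.trace = ∑ w, A w w from rfl]
      exact Equiv.sum_comp (Equiv.subLeft s) (fun w => A w w)
    rw [h2, Matrix.smul_apply, Matrix.one_apply_eq, smul_eq_mul, mul_one]
  · rw [if_neg, zero_mul, Matrix.smul_apply, Matrix.one_apply_ne hst, smul_zero]
    intro h0
    exact hst (funext fun i => by
      have := congrFun h0 i
      simpa [sub_eq_zero] using this)

end Aux2
section Aux3

variable {d n : ℕ} [NeZero d]

lemma chi_def (a : ZMod d) : chi d a = omg d ^ a.val := rfl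

lemma star_chi_mul_chi (a : ZMod d) : star (chi d a) * chi d a = 1 := by
  rw [mul_comm, show star (chi d a) = (starRingEnd ℂ) (chi d a) from rfl,
    Complex.mul_conj, ← Complex.sq_norm, abs_chi]
  norm_num

lemma chi_mul_star_chi (a : ZMod d) : chi d a * star (chi d a) = 1 := by
  rw [mul_comm]; exact star_chi_mul_chi a

lemma Xop_conjT (v : Fin n → ZMod d) : (Xop d n v)ᴴ = Xop d n (-v) := by
  ext s t
  rw [Matrix.conjTranspose_apply]
  simp only [Xop, Matrix.of_apply, apply_ite star, star_one, star_zero]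
  by_cases h : t = s + v
  · rw [if_pos h, if_pos (by rw [h, add_neg_cancel_right])]
  · rw [if_neg h, if_neg]
    intro hs; exact h (by rw [hs, neg_add_cancel_right])

lemma Xop_mul (v w : Fin n → ZMod d) : Xop d n v * Xop d n w = Xop d n (w + v) := by
  ext s t
  rw [Matrix.mul_apply]
  simp only [Xop, Matrix.of_apply]
  rw [Finset.sum_eq_single (s - v)]
  · rw [if_pos (sub_add_cancel s v).symm, one_mul]
    by_cases h : s - v = t + w
    · rw [if_pos h, if_pos (by rw [← add_assoc, ← h, sub_add_cancel])]
    · rw [if_neg h, if_neg]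
      intro hs; exact h (by rw [hs, ← add_assoc, add_sub_cancel_right])
  · intro a _ ha
    rw [if_neg, zero_mul]
    intro hs; exact ha (by rw [hs, add_sub_cancel_right])
  · exact fun habs => absurd (Finset.mem_univ _) habs

lemma Xop_zero : Xop d n 0 = 1 := by
  ext s t
  simp [Xop, Matrix.one_apply]

lemma Xop_hmul (v : Fin n → ZMod d) : (Xop d n v)ᴴ * Xop d n v = 1 := by
  rw [Xop_conjT, Xop_mul, add_neg_cancel, Xop_zero]

lemma Xop_mul_h (v : Fin n → ZMod d) : Xop d n v * (Xop d n v)ᴴ = 1 := by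
  rw [Xop_conjT, Xop_mul, neg_add_cancel, Xop_zero]

lemma Zop_hmul (u : Fin n → ZMod d) : (Zop d n u)ᴴ * Zop d n u = 1 := by
  rw [Zop, Matrix.diagonal_conjTranspose, Matrix.diagonal_mul_diagonal, ← Matrix.diagonal_one]
  refine congrArg Matrix.diagonal (funext fun s => ?_)
  simp only [Pi.mul_apply, Pi.star_apply, Pi.one_apply]
  exact star_chi_mul_chi (d := d) _

lemma Zop_mul_h (u : Fin n → ZMod d) : Zop d n u * (Zop d n u)ᴴ = 1 := by
  rw [Zop, Matrix.diagonal_conjTranspose, Matrix.diagonal_mul_diagonal, ← Matrix.diagonal_one]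
  refine congrArg Matrix.diagonal (funext fun s => ?_)
  simp only [Pi.mul_apply, Pi.star_apply, Pi.one_apply]
  exact chi_mul_star_chi (d := d) _

lemma weyl_unitary (h : PSpace d n) : Weyl d n h ∈ unitary (Mat d n) := by
  rw [Unitary.mem_iff]
  constructor
  · rw [Weyl, star_smul, Matrix.star_mul, Matrix.star_eq_conjTranspose, Matrix.star_eq_conjTranspose,
      Matrix.smul_mul, Matrix.mul_smul, smul_smul, tau_star_mul_zpow, one_smul,
      mul_assoc, ← mul_assoc ((Zop d n h.1)ᴴ), Zop_hmul, one_mul, Xop_hmul]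
  · rw [Weyl, star_smul, Matrix.star_mul, Matrix.star_eq_conjTranspose, Matrix.star_eq_conjTranspose,
      Matrix.smul_mul, Matrix.mul_smul, smul_smul, tau_zpow_mul_star, one_smul,
      mul_assoc, ← mul_assoc (Xop d n h.2), Xop_mul_h, one_mul, Zop_mul_h]

lemma pderiv_unitary (h : PSpace d n) {U : Mat d n} (hU : U ∈ unitary (Mat d n)) :
    pderiv d n h U ∈ unitary (Mat d n) := by
  have hW := weyl_unitary (d := d) (n := n) h
  rw [pderiv, ← Matrix.star_eq_conjTranspose, ← Matrix.star_eq_conjTranspose]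
  exact mul_mem (mul_mem (mul_mem hW hU) (Unitary.star_mem hW)) (Unitary.star_mem hU)

lemma hdn_ne : ((d:ℂ)^n) ≠ 0 := pow_ne_zero _ (Nat.cast_ne_zero.mpr (NeZero.ne d))

lemma pq_succ (k : ℕ) (U : Mat d n) :
    pq d n (k+1) U = ((d:ℂ)^(2*n))⁻¹ * ∑ h : PSpace d n, pq d n k (pderiv d n h U) := rfl

lemma pq_one_eq (hp : d.Prime) (V : Mat d n) :
    pq d n 1 V = ((d:ℂ)^(2*n))⁻¹ * (V.trace * (starRingEnd ℂ) V.trace) := by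
  rw [pq_succ]
  congr 1
  have hsum : ∑ h : PSpace d n, pderiv d n h V = ((d:ℂ)^n * V.trace) • Vᴴ := by
    simp only [pderiv]
    rw [← Finset.sum_mul, weyl_avg hp V, Matrix.smul_mul, Matrix.one_mul]
  have key : ∑ h : PSpace d n, (pderiv d n h V).trace
      = (d:ℂ)^n * (V.trace * (starRingEnd ℂ) V.trace) := by
    rw [← Matrix.trace_sum, hsum, Matrix.trace_smul, Matrix.trace_conjTranspose, smul_eq_mul]
    rw [show star V.trace = (starRingEnd ℂ) V.trace from rfl]
    ring
  simp only [pq]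
  rw [← Finset.mul_sum, key, ← mul_assoc, inv_mul_cancel₀ (hdn_ne (d := d) (n := n)), one_mul]

lemma card_pspace : Fintype.card (PSpace d n) = d ^ (2*n) := by
  simp [PSpace, Fintype.card_prod, Fintype.card_fun, ZMod.card]
  ring

lemma sum_normSq_unitary {V : Mat d n} (hV : V ∈ unitary (Mat d n)) :
    ∑ a : Fin n → ZMod d, ∑ b : Fin n → ZMod d, Complex.normSq (V a b) = (d:ℝ)^n := by
  have h1 : star V * V = 1 := hV.1
  have h2 : (star V * V).trace = ((d:ℝ)^n : ℂ) := by
    rw [h1, Matrix.trace_one]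
    push_cast
    simp [Fintype.card_fun, ZMod.card]
  have h3 : (star V * V).trace = ∑ a : Fin n → ZMod d, ∑ b : Fin n → ZMod d,
      ((Complex.normSq (V b a) : ℝ) : ℂ) := by
    rw [Matrix.trace]
    apply Finset.sum_congr rfl
    intro a _
    rw [Matrix.diag, Matrix.mul_apply]
    apply Finset.sum_congr rfl
    intro b _
    rw [Matrix.star_eq_conjTranspose, Matrix.conjTranspose_apply, mul_comm,
      show star (V b a) = (starRingEnd ℂ) (V b a) from rfl, Complex.mul_conj]
  rw [h3] at h2
  have h4 : ((∑ a : Fin n → ZMod d, ∑ b : Fin n → ZMod d, Complex.normSq (V b a) : ℝ) : ℂ)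
      = (((d:ℝ)^n : ℝ) : ℂ) := by
    push_cast
    exact h2
  have h5 := Complex.ofReal_injective h4
  rw [← h5]
  exact Finset.sum_comm

end Aux3
section Aux4

variable {d n : ℕ} [NeZero d]

lemma trace_eq_sum_diag (V : Mat d n) : V.trace = ∑ a, V a a := rfl

lemma card_ket : (Fintype.card (Fin n → ZMod d) : ℝ) = (d:ℝ)^n := by
  simp [Fintype.card_fun, ZMod.card]

lemma normSq_trace_le {V : Mat d n} (hV : V ∈ unitary (Mat d n)) :
    Complex.normSq V.trace ≤ ((d:ℝ)^n)^2 := by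
  set N : ℝ := (d:ℝ)^n with hN
  have htot := sum_normSq_unitary hV
  have hdiag : ∑ a, Complex.normSq (V a a) ≤ N := by
    rw [hN, ← htot]
    apply Finset.sum_le_sum
    intro a _
    exact Finset.single_le_sum (fun b _ => Complex.normSq_nonneg _) (Finset.mem_univ a)
  have h1 : ‖V.trace‖ ≤ ∑ a, ‖V a a‖ := by
    rw [trace_eq_sum_diag]
    exact norm_sum_le _ _
  have h2 : (∑ a, ‖V a a‖)^2 ≤ N * ∑ a, Complex.normSq (V a a) := by
    have h3 := Finset.sum_mul_sq_le_sq_mul_sq Finset.univ (fun _ => (1:ℝ))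
      (fun a => ‖V a a‖)
    simp only [one_mul, one_pow, Finset.sum_const, Finset.card_univ, nsmul_eq_mul,
      mul_one] at h3
    calc (∑ a, ‖V a a‖)^2
        ≤ (Fintype.card (Fin n → ZMod d) : ℝ) * ∑ a, (‖V a a‖)^2 := h3
      _ = N * ∑ a, Complex.normSq (V a a) := by
          rw [card_ket]
          congr 1
          exact Finset.sum_congr rfl fun a _ => Complex.sq_norm _
  have h4 : Complex.normSq V.trace ≤ (∑ a, ‖V a a‖)^2 := by
    rw [← Complex.sq_norm]
    exact pow_le_pow_left₀ (norm_nonneg _) h1 2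
  have hNpos : (0:ℝ) ≤ N := by positivity
  calc Complex.normSq V.trace ≤ (∑ a, ‖V a a‖)^2 := h4
    _ ≤ N * ∑ a, Complex.normSq (V a a) := h2
    _ ≤ N * N := by nlinarith [hdiag]
    _ = N^2 := (sq N).symm

lemma pq_one_iff (hp : d.Prime) {V : Mat d n} (hV : V ∈ unitary (Mat d n)) :
    pq d n 1 V = 1 ↔ ∃ θ : ℝ, V = Complex.exp (θ * Complex.I) • (1 : Mat d n) := by
  classical
  have hdC : ((d:ℂ)^n) ≠ 0 := hdn_ne
  have hd2C : ((d:ℂ)^(2*n)) ≠ 0 := pow_ne_zero _ (Nat.cast_ne_zero.mpr (NeZero.ne d))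
  have hcardC : (Fintype.card (Fin n → ZMod d) : ℂ) = (d:ℂ)^n := by
    have := card_ket (d := d) (n := n)
    push_cast at this ⊢
    exact_mod_cast this
  constructor
  · intro h
    rw [pq_one_eq hp] at h
    rw [Complex.mul_conj] at h
    have h1 : ((Complex.normSq V.trace : ℝ) : ℂ) = (d:ℂ)^(2*n) := by
      field_simp at h
      exact_mod_cast h
    have h2 : Complex.normSq V.trace = ((d:ℝ)^n)^2 := by
      have : ((d:ℝ)^(2*n)) = ((d:ℝ)^n)^2 := by rw [pow_mul']
      rw [← this]
      exact_mod_cast h1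
    set N : ℝ := (d:ℝ)^n with hN
    have hdpos : (0:ℝ) < (d:ℝ) := Nat.cast_pos.mpr (Nat.pos_of_ne_zero (NeZero.ne d))
    have hNpos : (0:ℝ) < N := by rw [hN]; positivity
    set μ : ℂ := ((d:ℂ)^n)⁻¹ * V.trace with hμ
    have hμt : V.trace = (d:ℂ)^n * μ := by
      rw [hμ, ← mul_assoc, mul_inv_cancel₀ hdC, one_mul]
    have hdR : ((d:ℂ)^n) = ((N : ℝ) : ℂ) := by rw [hN]; push_cast; ring
    have hnormμ : Complex.normSq μ = 1 := by
      have h3 : Complex.normSq V.trace = N^2 * Complex.normSq μ := by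
        rw [hμt, Complex.normSq_mul, hdR, Complex.normSq_ofReal, sq]
      rw [h2] at h3
      have hN2 : N^2 ≠ 0 := pow_ne_zero _ (ne_of_gt hNpos)
      have h4 : N^2 * 1 = N^2 * Complex.normSq μ := by rw [mul_one]; exact h3
      exact (mul_left_cancel₀ hN2 h4).symm
    have htot := sum_normSq_unitary hV
    have hdiag_le : ∑ a, Complex.normSq (V a a) ≤ N := by
      rw [hN, ← htot]
      apply Finset.sum_le_sum
      intro a _
      exact Finset.single_le_sum (fun b _ => Complex.normSq_nonneg _) (Finset.mem_univ a)
    -- cross term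
    have hcross : (V.trace * (starRingEnd ℂ) μ).re = N := by
      rw [hμt, mul_assoc, Complex.mul_conj, hnormμ, hdR]
      push_cast
      simp
    -- variance identity
    have hE : ∑ a, Complex.normSq (V a a - μ) = (∑ a, Complex.normSq (V a a)) - N := by
      have e1 : ∀ a : Fin n → ZMod d, Complex.normSq (V a a - μ)
          = Complex.normSq (V a a) + Complex.normSq μ
            - 2 * (V a a * (starRingEnd ℂ) μ).re := fun a => Complex.normSq_sub _ _
      rw [Finset.sum_congr rfl fun a _ => e1 a]
      rw [Finset.sum_sub_distrib, Finset.sum_add_distrib, Finset.sum_const,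
        Finset.card_univ, nsmul_eq_mul]
      have e2 : ∑ a, 2 * (V a a * (starRingEnd ℂ) μ).re
          = 2 * ((∑ a, V a a) * (starRingEnd ℂ) μ).re := by
        rw [← Finset.mul_sum, Finset.sum_mul]
        congr 1
        rw [Complex.re_sum]
      rw [e2, ← trace_eq_sum_diag, hcross, hnormμ, mul_one, card_ket, ← hN]
      ring
    have hEnonneg : 0 ≤ ∑ a, Complex.normSq (V a a - μ) :=
      Finset.sum_nonneg fun a _ => Complex.normSq_nonneg _
    have hE0 : ∑ a, Complex.normSq (V a a - μ) = 0 := le_antisymm (by linarith [hE, hdiag_le]) hEnonneg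
    have hdiag_eq : ∀ a, V a a = μ := by
      intro a
      have := (Finset.sum_eq_zero_iff_of_nonneg
        (fun a _ => Complex.normSq_nonneg (V a a - μ))).mp hE0 a (Finset.mem_univ a)
      have := Complex.normSq_eq_zero.mp this
      exact sub_eq_zero.mp this
    have hS : ∑ a, Complex.normSq (V a a) = N := by linarith [hE, hE0]
    -- off-diagonal vanishing
    have hrow : ∀ a : Fin n → ZMod d, ∑ b, Complex.normSq (V a b) = 1 := by
      have hle : ∀ a ∈ Finset.univ, (fun _ : Fin n → ZMod d => (1:ℝ)) a
          ≤ ∑ b, Complex.normSq (V a b) := by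
        intro a _
        have h5 : Complex.normSq (V a a) = 1 := by rw [hdiag_eq a, hnormμ]
        calc (1:ℝ) = Complex.normSq (V a a) := h5.symm
          _ ≤ ∑ b, Complex.normSq (V a b) :=
            Finset.single_le_sum (fun b _ => Complex.normSq_nonneg _) (Finset.mem_univ a)
      have hsums : ∑ a : Fin n → ZMod d, (1:ℝ) = ∑ a, ∑ b, Complex.normSq (V a b) := by
        rw [htot, Finset.sum_const, Finset.card_univ, nsmul_eq_mul, mul_one, card_ket]
      have := (Finset.sum_eq_sum_iff_of_le hle).mp hsums
      intro a
      exact (this a (Finset.mem_univ a)).symm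
    have hoff : ∀ a b, a ≠ b → V a b = 0 := by
      intro a b hab
      have h6 : ∑ c ∈ Finset.univ.erase a, Complex.normSq (V a c) = 0 := by
        have := Finset.add_sum_erase Finset.univ (fun c => Complex.normSq (V a c))
          (Finset.mem_univ a)
        have h7 : Complex.normSq (V a a) = 1 := by rw [hdiag_eq a, hnormμ]
        rw [hrow a] at this
        linarith [this, h7]
      have h8 := (Finset.sum_eq_zero_iff_of_nonneg
        (fun c _ => Complex.normSq_nonneg (V a c))).mp h6 b
        (Finset.mem_erase.mpr ⟨fun hba => hab hba.symm, Finset.mem_univ b⟩)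
      exact Complex.normSq_eq_zero.mp h8
    -- conclude V = μ • 1
    have hVμ : V = μ • (1 : Mat d n) := by
      ext a b
      rw [Matrix.smul_apply]
      by_cases hab : a = b
      · subst hab
        rw [Matrix.one_apply_eq, smul_eq_mul, mul_one, hdiag_eq a]
      · rw [Matrix.one_apply_ne hab, smul_zero, hoff a b hab]
    have habsμ : ‖μ‖ = 1 := by
      rw [Complex.norm_def, hnormμ, Real.sqrt_one]
    have hμexp : Complex.exp (↑μ.arg * Complex.I) = μ := by
      conv_rhs => rw [← Complex.norm_mul_exp_arg_mul_I μ]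
      rw [habsμ, Complex.ofReal_one, one_mul]
    refine ⟨μ.arg, ?_⟩
    rw [hVμ, hμexp]
  · rintro ⟨θ, rfl⟩
    rw [pq_one_eq hp, Matrix.trace_smul, Matrix.trace_one, smul_eq_mul, hcardC]
    rw [map_mul (starRingEnd ℂ) (Complex.exp (↑θ * Complex.I)) ((d:ℂ)^n)]
    have hcd : (starRingEnd ℂ) ((d:ℂ)^n) = (d:ℂ)^n := by
      rw [map_pow, Complex.conj_natCast]
    rw [hcd]
    have hcc : Complex.exp (θ * Complex.I) * (starRingEnd ℂ) (Complex.exp (θ * Complex.I)) = 1 := by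
      rw [Complex.mul_conj, ← Complex.sq_norm, Complex.norm_exp_ofReal_mul_I]
      norm_num
    have harr : Complex.exp (↑θ * Complex.I) * (d:ℂ)^n
        * ((starRingEnd ℂ) (Complex.exp (↑θ * Complex.I)) * (d:ℂ)^n)
        = (d:ℂ)^(2*n) := by
      have : (d:ℂ)^n * (d:ℂ)^n = (d:ℂ)^(2*n) := by rw [← pow_add]; ring_nf
      calc Complex.exp (↑θ * Complex.I) * (d:ℂ)^n
          * ((starRingEnd ℂ) (Complex.exp (↑θ * Complex.I)) * (d:ℂ)^n)
          = (Complex.exp (↑θ * Complex.I) * (starRingEnd ℂ) (Complex.exp (↑θ * Complex.I)))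
            * ((d:ℂ)^n * (d:ℂ)^n) := by ring
        _ = (d:ℂ)^(2*n) := by rw [hcc, one_mul, this]
    rw [harr, inv_mul_cancel₀ hd2C]

end Aux4
section Main

variable {d n : ℕ} [NeZero d]

lemma hd2R_pos : (0:ℝ) < (d:ℝ)^(2*n) := by
  have : (0:ℝ) < (d:ℝ) := Nat.cast_pos.mpr (Nat.pos_of_ne_zero (NeZero.ne d))
  positivity

lemma hd2C_ne : ((d:ℂ)^(2*n)) ≠ 0 := pow_ne_zero _ (Nat.cast_ne_zero.mpr (NeZero.ne d))

lemma sum_one_pspace : ∑ _h : PSpace d n, (1:ℝ) = (d:ℝ)^(2*n) := by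
  rw [Finset.sum_const, Finset.card_univ, card_pspace, nsmul_eq_mul, mul_one]
  push_cast
  ring

lemma pq_bounds (hp : d.Prime) (k : ℕ) (hk : 1 ≤ k) :
    ∀ V : Mat d n, V ∈ unitary (Mat d n) →
      ∃ r : ℝ, pq d n k V = (r:ℂ) ∧ 0 ≤ r ∧ r ≤ 1 := by
  induction k, hk using Nat.le_induction with
  | base =>
    intro V hV
    refine ⟨((d:ℝ)^(2*n))⁻¹ * Complex.normSq V.trace, ?_, ?_, ?_⟩
    · rw [pq_one_eq hp, Complex.mul_conj]
      push_cast
      ring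
    · exact mul_nonneg (by positivity) (Complex.normSq_nonneg _)
    · have hb := normSq_trace_le hV
      have he : ((d:ℝ)^n)^2 = (d:ℝ)^(2*n) := by rw [← pow_mul]; ring_nf
      rw [he] at hb
      calc ((d:ℝ)^(2*n))⁻¹ * Complex.normSq V.trace
          ≤ ((d:ℝ)^(2*n))⁻¹ * (d:ℝ)^(2*n) :=
            mul_le_mul_of_nonneg_left hb (by positivity)
        _ = 1 := inv_mul_cancel₀ (ne_of_gt hd2R_pos)
  | succ k hk ih =>
    intro V hV
    choose r hr h0 h1 using fun h : PSpace d n => ih (pderiv d n h V) (pderiv_unitary h hV)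
    refine ⟨((d:ℝ)^(2*n))⁻¹ * ∑ h : PSpace d n, r h, ?_, ?_, ?_⟩
    · rw [pq_succ, Finset.sum_congr rfl (fun h _ => hr h), ← Complex.ofReal_sum]
      push_cast
      ring
    · exact mul_nonneg (by positivity) (Finset.sum_nonneg fun h _ => h0 h)
    · have hsle : ∑ h : PSpace d n, r h ≤ (d:ℝ)^(2*n) := by
        calc ∑ h : PSpace d n, r h ≤ ∑ _h : PSpace d n, (1:ℝ) :=
            Finset.sum_le_sum fun h _ => h1 h
          _ = (d:ℝ)^(2*n) := sum_one_pspace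
      calc ((d:ℝ)^(2*n))⁻¹ * ∑ h : PSpace d n, r h
          ≤ ((d:ℝ)^(2*n))⁻¹ * (d:ℝ)^(2*n) :=
            mul_le_mul_of_nonneg_left hsle (by positivity)
        _ = 1 := inv_mul_cancel₀ (ne_of_gt hd2R_pos)

lemma main_iff (hp : d.Prime) (k : ℕ) (hk : 1 ≤ k) :
    ∀ V : Mat d n, V ∈ unitary (Mat d n) →
      (pq d n k V = 1 ↔ V ∈ ppoly d n (k-1)) := by
  induction k, hk using Nat.le_induction with
  | base =>
    intro V hV
    rw [pq_one_iff hp hV]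
    exact Iff.rfl
  | succ k hk ih =>
    intro V hV
    obtain ⟨m, rfl⟩ : ∃ m, k = m + 1 := ⟨k - 1, (Nat.succ_pred_eq_of_pos hk).symm⟩
    constructor
    · intro hpq
      rw [pq_succ] at hpq
      choose r hr h0 h1 using fun h : PSpace d n =>
        pq_bounds hp (m+1) (by omega) (pderiv d n h V) (pderiv_unitary h hV)
      rw [Finset.sum_congr rfl (fun h _ => hr h), ← Complex.ofReal_sum] at hpq
      have hC : ((∑ h : PSpace d n, r h : ℝ) : ℂ) = (((d:ℝ)^(2*n) : ℝ) : ℂ) := by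
        field_simp at hpq
        rw [div_eq_one_iff_eq hd2C_ne] at hpq
        push_cast
        exact_mod_cast hpq
      have hsum := Complex.ofReal_injective hC
      have hall := (Finset.sum_eq_sum_iff_of_le (fun h _ => h1 h)).mp
        (by rw [hsum, ← sum_one_pspace (d := d) (n := n)])
      refine ⟨hV, fun h => ?_⟩
      have hone : pq d n (m+1) (pderiv d n h V) = 1 := by
        rw [hr h, hall h (Finset.mem_univ h)]
        norm_num
      exact (ih (pderiv d n h V) (pderiv_unitary h hV)).mp hone
    · intro hV2
      obtain ⟨_, hall⟩ := hV2
      rw [pq_succ]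
      have hone : ∀ h : PSpace d n, pq d n (m+1) (pderiv d n h V) = 1 := fun h =>
        (ih _ (pderiv_unitary h hV)).mpr (hall h)
      rw [Finset.sum_congr rfl fun h _ => hone h, Finset.sum_const, Finset.card_univ,
        card_pspace, nsmul_eq_mul, mul_one]
      rw [show ((d ^ (2*n) : ℕ) : ℂ) = (d:ℂ)^(2*n) by push_cast; ring]
      exact inv_mul_cancel₀ hd2C_ne

end Main

theorem stmt8 (d n : ℕ) [NeZero d] (hd : d.Prime) (hn : 1 ≤ n)
    (k : ℕ) (hk : 1 ≤ k) (U : Mat d n) (hU : U ∈ unitary (Mat d n)) :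
    pq d n k U = 1 ↔ U ∈ ppoly d n (k - 1) := by
  exact main_iff hd k hk U hU

end CH
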